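/- Let Q(x,y) = ∑_{i,j≥0} Q_{i,j} x^i y^j ∈ ℚ[[x,y]] and G(x) = x³ ∑_{i≥0} Q_{i,0} x^i ∈ ℚ[[x]]. Then the identity (xy − x³ − y³) · Q(x,y) = x²y² − G(x) − G(y) holds in the ring ℚ[[x,y]] of formal power series in two variables. -/

import Mathlib

/-- `w : Fin (n+1) → ℤ × ℤ` is a knight walk of length `n`: it starts at `(1,1)`, takes its
steps in `{(-1,2), (2,-1)}` and all its vertices have nonnegative coordinates. -/
def IsKnightWalk (n : ℕ) (w : Fin (n + 1) → ℤ × ℤ) : Prop :=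
  w 0 = (1, 1) ∧
  (∀ k : Fin n, w k.succ - w k.castSucc ∈ ({(-1, 2), (2, -1)} : Set (ℤ × ℤ))) ∧
  ∀ k, 0 ≤ (w k).1 ∧ 0 ≤ (w k).2

/-- `Q i j` is the number of knight walks (of any length) ending at `(i, j)`. -/
noncomputable def Q (i j : ℕ) : ℕ :=
  Nat.card {p : Σ n : ℕ, Fin (n + 1) → ℤ × ℤ //
    IsKnightWalk p.1 p.2 ∧ p.2 (Fin.last p.1) = ((i : ℤ), (j : ℤ))}

/-- `Q(x, y) = ∑_{i,j ≥ 0} Q_{i,j} xⁱ yʲ` as a formal power series in two variables. -/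
noncomputable def Qxy : MvPowerSeries (Fin 2) ℚ :=
  fun e => (Q (e 0) (e 1) : ℚ)

/-- Coefficients of `G(x) = x³ ∑_{i ≥ 0} Q_{i,0} xⁱ`. -/
noncomputable def gCoeff (n : ℕ) : ℚ :=
  if 3 ≤ n then (Q (n - 3) 0 : ℚ) else 0

/-- `G(x)` viewed inside `ℚ[[x, y]]`. -/
noncomputable def Gx : MvPowerSeries (Fin 2) ℚ :=
  fun e => if e 1 = 0 then gCoeff (e 0) else 0

/-- `G(y)` viewed inside `ℚ[[x, y]]`. -/
noncomputable def Gy : MvPowerSeries (Fin 2) ℚ :=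
  fun e => if e 0 = 0 then gCoeff (e 1) else 0


/-- step of a knight walk, encoded by a boolean -/
def stp (b : Bool) : ℤ × ℤ := if b then (-1, 2) else (2, -1)

/-- endpoint of a walk given by its list of steps in reverse order -/
def endpt : List Bool → ℤ × ℤ
  | [] => (1, 1)
  | b :: t => endpt t + stp b

def nn (p : ℤ × ℤ) : Prop := 0 ≤ p.1 ∧ 0 ≤ p.2

def validL (l : List Bool) : Prop := ∀ t, t <:+ l → nn (endpt t)

def V (c : ℤ × ℤ) : Type := {l : List Bool // validL l ∧ endpt l = c}

noncomputable def QV (c : ℤ × ℤ) : ℕ := Nat.card (V c)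

lemma endpt_sum (l : List Bool) : (endpt l).1 + (endpt l).2 = 2 + l.length := by
  induction l with
  | nil => simp [endpt]
  | cons b t ih =>
      rcases b with _ | _ <;>
      simp [endpt, stp, Prod.fst_add, Prod.snd_add] <;> omega

lemma length_of_V {c : ℤ × ℤ} (x : V c) : (x.1.length : ℤ) = c.1 + c.2 - 2 := by
  have h := endpt_sum x.1
  rw [x.2.2] at h
  omega

instance V_finite (c : ℤ × ℤ) : Finite (V c) := by
  haveI : Finite {l : List Bool // l.length = (c.1 + c.2 - 2).toNat} :=
    Finite.of_fintype (List.Vector Bool (c.1 + c.2 - 2).toNat)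
  apply Finite.of_injective (fun x : V c =>
    (⟨x.1, by have := length_of_V x; omega⟩ : List.Vector Bool (c.1 + c.2 - 2).toNat))
  intro a b hab
  have h2 := congrArg Subtype.val hab
  exact Subtype.ext h2

lemma V_empty {c : ℤ × ℤ} (h : ¬ nn c) : IsEmpty (V c) := by
  constructor
  intro x
  exact h (x.2.2 ▸ x.2.1 x.1 (List.suffix_refl _))

lemma QV_neg {c : ℤ × ℤ} (h : ¬ nn c) : QV c = 0 := by
  have := V_empty h
  exact Nat.card_of_isEmpty

lemma card_plift (p : Prop) [Decidable p] : Nat.card (PLift p) = if p then 1 else 0 := by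
  by_cases h : p
  · haveI : Unique (PLift p) := ⟨⟨⟨h⟩⟩, fun x => rfl⟩
    simp [Nat.card_unique, h]
  · haveI : IsEmpty (PLift p) := ⟨fun x => h x.down⟩
    simp [Nat.card_of_isEmpty, h]

lemma validL_nil : validL [] := by
  intro t ht
  rw [List.suffix_nil.mp ht]
  exact ⟨by norm_num [endpt], by norm_num [endpt]⟩

lemma validL_cons_iff {b : Bool} {t : List Bool} :
    validL (b :: t) ↔ validL t ∧ nn (endpt (b :: t)) := by
  constructor
  · intro h
    exact ⟨fun s hs => h s (hs.trans (List.suffix_cons b t)), h _ (List.suffix_refl _)⟩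
  · rintro ⟨h1, h2⟩ s hs
    rcases List.suffix_cons_iff.mp hs with rfl | hs
    · exact h2
    · exact h1 s hs

def recEquiv (c : ℤ × ℤ) (hc : nn c) :
    V c ≃ (PLift (c = (1, 1)) ⊕ (V (c - stp true) ⊕ V (c - stp false))) where
  toFun x :=
    match x with
    | ⟨[], h⟩ => Sum.inl ⟨h.2.symm⟩
    | ⟨true :: t, h⟩ =>
        Sum.inr (Sum.inl ⟨t, (validL_cons_iff.mp h.1).1, eq_sub_of_add_eq h.2⟩)
    | ⟨false :: t, h⟩ =>
        Sum.inr (Sum.inr ⟨t, (validL_cons_iff.mp h.1).1, eq_sub_of_add_eq h.2⟩)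
  invFun x :=
    match x with
    | Sum.inl ⟨h⟩ => ⟨[], validL_nil, h.symm⟩
    | Sum.inr (Sum.inl ⟨t, hv, he⟩) =>
        ⟨true :: t,
          validL_cons_iff.mpr ⟨hv, by show nn (endpt t + stp true); rw [he, sub_add_cancel]; exact hc⟩,
          by show endpt t + stp true = c; rw [he, sub_add_cancel]⟩
    | Sum.inr (Sum.inr ⟨t, hv, he⟩) =>
        ⟨false :: t,
          validL_cons_iff.mpr ⟨hv, by show nn (endpt t + stp false); rw [he, sub_add_cancel]; exact hc⟩,
          by show endpt t + stp false = c; rw [he, sub_add_cancel]⟩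
  left_inv x := by
    rcases x with ⟨(_ | ⟨(_|_), t⟩), h⟩ <;> rfl
  right_inv x := by
    rcases x with ⟨h⟩ | (⟨t, hv, he⟩ | ⟨t, hv, he⟩) <;> rfl

lemma QV_rec (c : ℤ × ℤ) (hc : nn c) :
    QV c = (if c = (1, 1) then 1 else 0) + QV (c - stp true) + QV (c - stp false) := by
  unfold QV
  rw [Nat.card_congr (recEquiv c hc), Nat.card_sum, Nat.card_sum, card_plift]
  ring

def toListW {n : ℕ} (w : Fin (n + 1) → ℤ × ℤ) : List Bool :=
  (List.ofFn fun k : Fin n => decide (w k.succ - w k.castSucc = (-1, 2))).reverse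

@[simp] lemma toListW_length {n : ℕ} (w : Fin (n + 1) → ℤ × ℤ) :
    (toListW w).length = n := by simp [toListW]

lemma rep {n : ℕ} {w : Fin (n + 1) → ℤ × ℤ} (hw : IsKnightWalk n w) :
    ∀ k : ℕ, (hk : k < n + 1) → w ⟨k, hk⟩ = endpt ((toListW w).drop (n - k)) := by
  intro k
  induction k with
  | zero =>
      intro hk
      rw [List.drop_eq_nil_of_le (by simp)]
      have h0 : (⟨0, hk⟩ : Fin (n + 1)) = 0 := by ext; simp
      rw [h0, hw.1]
      rfl
  | succ k ih =>
      intro hk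
      have hkn : k < n := by omega
      have hstep := hw.2.1 ⟨k, hkn⟩
      have hL : (toListW w).length = n := toListW_length w
      have hdrop : (toListW w).drop (n - (k + 1)) =
          ((toListW w)[n - (k + 1)]'(by simp; omega)) :: (toListW w).drop (n - k) := by
        rw [List.drop_eq_getElem_cons (by simp; omega),
          show n - (k + 1) + 1 = n - k by omega]
      have hget : (toListW w)[n - (k + 1)]'(by simp; omega) =
          decide (w (⟨k, hkn⟩ : Fin n).succ - w (⟨k, hkn⟩ : Fin n).castSucc = (-1, 2)) := by
        simp only [toListW, List.getElem_reverse, List.getElem_ofFn]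
        congr 2
        have hgen : ∀ a b : Fin n, a = b →
            w a.succ - w a.castSucc = w b.succ - w b.castSucc := fun a b h => by rw [h]
        apply hgen
        apply Fin.ext
        simp
        omega
      have hsucc : (⟨k, hkn⟩ : Fin n).succ = (⟨k + 1, hk⟩ : Fin (n + 1)) := rfl
      have hcast : (⟨k, hkn⟩ : Fin n).castSucc = (⟨k, by omega⟩ : Fin (n + 1)) := rfl
      have key : w ⟨k + 1, hk⟩ = w ⟨k, by omega⟩ +
          stp (decide (w (⟨k, hkn⟩ : Fin n).succ - w (⟨k, hkn⟩ : Fin n).castSucc = (-1, 2))) := by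
        rcases hstep with h | h
        · rw [decide_eq_true h]
          rw [hsucc, hcast] at h
          rw [show stp true = (-1, 2) from rfl]
          exact sub_eq_iff_eq_add'.mp h
        · simp only [Set.mem_singleton_iff] at h
          have hb : decide (w (⟨k, hkn⟩ : Fin n).succ - w (⟨k, hkn⟩ : Fin n).castSucc = (-1, 2))
              = false := by rw [h]; decide
          rw [hb]
          rw [hsucc, hcast] at h
          rw [show stp false = (2, -1) from rfl]
          exact sub_eq_iff_eq_add'.mp h
      rw [hdrop, endpt, ← ih (by omega), hget]
      exact key

lemma toListW_valid {n : ℕ} {w : Fin (n + 1) → ℤ × ℤ} (hw : IsKnightWalk n w) :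
    validL (toListW w) := by
  intro t ht
  obtain ⟨s, hs⟩ := ht
  have hlen : s.length + t.length = n := by
    have := congrArg List.length hs
    simpa using this
  have hdrop : t = (toListW w).drop (n - t.length) := by
    rw [← hs, show n - t.length = s.length by omega, List.drop_left]
  have h2 : endpt t = w ⟨t.length, by omega⟩ := by
    conv_lhs => rw [hdrop]
    exact (rep hw t.length (by omega)).symm
  rw [h2]
  exact hw.2.2 _

lemma endpt_toListW {n : ℕ} {w : Fin (n + 1) → ℤ × ℤ} (hw : IsKnightWalk n w) :
    endpt (toListW w) = w (Fin.last n) := by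
  have := rep hw n (by omega)
  simp only [Nat.sub_self, List.drop_zero] at this
  rw [show Fin.last n = ⟨n, by omega⟩ from rfl, this]

def walkOf (l : List Bool) : Σ n : ℕ, Fin (n + 1) → ℤ × ℤ :=
  ⟨l.length, fun k => endpt (l.drop (l.length - (k : ℕ)))⟩

lemma walkOf_step (l : List Bool) (k : ℕ) (hk : k < l.length) :
    endpt (l.drop (l.length - (k + 1))) - endpt (l.drop (l.length - k)) =
      stp (l[l.length - (k + 1)]'(by omega)) := by
  rw [List.drop_eq_getElem_cons (show l.length - (k + 1) < l.length by omega),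
      show l.length - (k + 1) + 1 = l.length - k by omega, endpt, add_sub_cancel_left]

lemma walkOf_walk {l : List Bool} (hv : validL l) : IsKnightWalk l.length (walkOf l).2 := by
  refine ⟨?_, ?_, ?_⟩
  · show endpt (l.drop (l.length - ((0 : Fin (l.length + 1)) : ℕ))) = (1, 1)
    rw [show ((0 : Fin (l.length + 1)) : ℕ) = 0 from rfl, Nat.sub_zero, List.drop_length]
    rfl
  · intro k
    show endpt (l.drop (l.length - ((k : ℕ) + 1))) - endpt (l.drop (l.length - (k : ℕ))) ∈ _
    rw [walkOf_step l k k.isLt]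
    cases l[l.length - ((k : ℕ) + 1)]'(by have := k.isLt; omega) <;> simp [stp]
  · intro k
    exact hv _ (List.drop_suffix _ _)

lemma walkOf_end (l : List Bool) : (walkOf l).2 (Fin.last l.length) = endpt l := by
  show endpt (l.drop (l.length - l.length)) = endpt l
  simp

lemma toListW_walkOf (l : List Bool) : toListW (walkOf l).2 = l := by
  apply List.ext_getElem (by simp [walkOf])
  intro m h1 h2
  simp only [toListW, List.getElem_reverse, List.getElem_ofFn]
  have key : ∀ a : Fin (walkOf l).1, (a : ℕ) = l.length - 1 - m →
      decide ((walkOf l).2 a.succ - (walkOf l).2 a.castSucc = (-1, 2)) = l[m] := by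
    intro a ha
    have ham : a.val < l.length := a.isLt
    have hstep : (walkOf l).2 a.succ - (walkOf l).2 a.castSucc
        = stp (l[l.length - ((a : ℕ) + 1)]'(by omega)) := by
      exact walkOf_step l a a.isLt
    have hidx : l.length - ((a : ℕ) + 1) = m := by omega
    subst hidx
    rw [hstep]
    rw [show (l[l.length - ((a : ℕ) + 1)]'(h2)) =
      (l[l.length - ((a : ℕ) + 1)]'(by omega)) from rfl]
    cases l[l.length - ((a : ℕ) + 1)]'(by omega) <;> simp [stp]
  exact key _ (by simp [walkOf])


lemma sigma_ext {n m : ℕ} (h : n = m) {w : Fin (n + 1) → ℤ × ℤ} {v : Fin (m + 1) → ℤ × ℤ}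
    (hw : ∀ (k : ℕ) (hk : k < n + 1), w ⟨k, hk⟩ = v ⟨k, by omega⟩) :
    (⟨n, w⟩ : Σ n : ℕ, Fin (n + 1) → ℤ × ℤ) = ⟨m, v⟩ := by
  subst h
  congr 1
  funext k
  exact hw k k.isLt

def WT (c : ℤ × ℤ) : Type :=
  {p : Σ n : ℕ, Fin (n + 1) → ℤ × ℤ // IsKnightWalk p.1 p.2 ∧ p.2 (Fin.last p.1) = c}

lemma card_WT (c : ℤ × ℤ) : Nat.card (WT c) = QV c := by
  refine (Nat.card_eq_of_bijective (fun x : V c =>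
    (⟨walkOf x.1, walkOf_walk x.2.1, (walkOf_end x.1).trans x.2.2⟩ : WT c)) ⟨?_, ?_⟩).symm
  · intro a b hab
    apply Subtype.ext
    have h1 := congrArg (fun p : WT c => toListW p.1.2) hab
    simp only [toListW_walkOf] at h1
    exact h1
  · rintro ⟨⟨n, w⟩, hw, he⟩
    replace hw : IsKnightWalk n w := hw
    replace he : w (Fin.last n) = c := he
    have hL : (toListW w).length = n := toListW_length w
    refine ⟨⟨toListW w, toListW_valid hw, by rw [endpt_toListW hw]; exact he⟩, ?_⟩
    apply Subtype.ext
    show walkOf (toListW w) = (⟨n, w⟩ : Σ n : ℕ, Fin (n + 1) → ℤ × ℤ)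
    show (⟨(toListW w).length, fun k => endpt ((toListW w).drop ((toListW w).length - (k : ℕ)))⟩
      : Σ n : ℕ, Fin (n + 1) → ℤ × ℤ) = ⟨n, w⟩
    apply sigma_ext hL
    intro k hk
    show endpt ((toListW w).drop ((toListW w).length - k)) = w ⟨k, by show k < n + 1; omega⟩
    conv_lhs => rw [hL]
    exact (rep hw k (by omega)).symm

lemma Q_eq (i j : ℕ) : Q i j = QV ((i : ℤ), (j : ℤ)) := card_WT ((i : ℤ), (j : ℤ))

lemma QV_nat {x y : ℤ} {a b : ℕ} (hx : x = a) (hy : y = b) : QV (x, y) = Q a b := by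
  subst hx; subst hy; exact (Q_eq a b).symm

lemma QV_zero {x y : ℤ} (h : x < 0 ∨ y < 0) : QV (x, y) = 0 := by
  apply QV_neg
  intro hnn
  obtain ⟨h1, h2⟩ := hnn
  simp only at h1 h2
  omega

lemma main_rec (i j : ℕ) (hi : 1 ≤ i) (hj : 1 ≤ j) :
    Q (i - 1) (j - 1) = (if i = 2 ∧ j = 2 then 1 else 0)
      + (if 3 ≤ j then Q i (j - 3) else 0) + (if 3 ≤ i then Q (i - 3) j else 0) := by
  have hc : nn ((i : ℤ) - 1, (j : ℤ) - 1) := ⟨by simp; omega, by simp; omega⟩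
  have h := QV_rec ((i : ℤ) - 1, (j : ℤ) - 1) hc
  have e1 : ((i : ℤ) - 1, (j : ℤ) - 1) - stp true = ((i : ℤ), (j : ℤ) - 3) := by
    simp [stp, Prod.ext_iff] <;> omega
  have e2 : ((i : ℤ) - 1, (j : ℤ) - 1) - stp false = ((i : ℤ) - 3, (j : ℤ)) := by
    simp [stp, Prod.ext_iff] <;> omega
  rw [e1, e2] at h
  have e0 : QV ((i : ℤ) - 1, (j : ℤ) - 1) = Q (i - 1) (j - 1) :=
    QV_nat (by omega) (by omega)
  have e3 : QV ((i : ℤ), (j : ℤ) - 3) = if 3 ≤ j then Q i (j - 3) else 0 := by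
    split_ifs with h3
    · exact QV_nat (by omega) (by omega)
    · exact QV_zero (Or.inr (by omega))
  have e4 : QV ((i : ℤ) - 3, (j : ℤ)) = if 3 ≤ i then Q (i - 3) j else 0 := by
    split_ifs with h3
    · exact QV_nat (by omega) (by omega)
    · exact QV_zero (Or.inl (by omega))
  have e5 : (((i : ℤ) - 1, (j : ℤ) - 1) = ((1 : ℤ), (1 : ℤ))) ↔ (i = 2 ∧ j = 2) := by
    rw [Prod.ext_iff]
    constructor <;> intro ⟨u, v⟩ <;> constructor <;> simp at * <;> omega
  rw [e0, e3, e4] at h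
  rw [h]
  by_cases h22 : i = 2 ∧ j = 2
  · rw [if_pos h22, if_pos (e5.mpr h22)]
  · rw [if_neg h22, if_neg (fun hh => h22 (e5.mp hh))]


lemma endpt_map (l : List Bool) : endpt (l.map (fun b => !b)) = (endpt l).swap := by
  induction l with
  | nil => rfl
  | cons b t ih =>
      rw [List.map_cons, endpt, endpt, ih]
      cases b <;> simp [stp, Prod.ext_iff]

lemma validL_map {l : List Bool} (h : validL l) : validL (l.map (fun b => !b)) := by
  intro t ht
  obtain ⟨s, hs⟩ := ht
  have hlen : t = ((l.drop s.length).map (fun b => !b)) := by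
    rw [List.map_drop, ← hs, List.drop_left]
  rw [hlen, endpt_map]
  have hnn := h _ (List.drop_suffix s.length l)
  exact ⟨hnn.2, hnn.1⟩

lemma QV_swap (c : ℤ × ℤ) : QV c = QV c.swap := by
  unfold QV
  apply Nat.card_congr
  refine ⟨fun x => ⟨x.1.map (fun b => !b), validL_map x.2.1, by rw [endpt_map, x.2.2]⟩,
          fun x => ⟨x.1.map (fun b => !b), validL_map x.2.1,
            by rw [endpt_map, x.2.2, Prod.swap_swap]⟩, ?_, ?_⟩ <;>
  · intro x
    apply Subtype.ext
    show (x.1.map _).map _ = x.1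
    rw [List.map_map, show ((fun b => !b) ∘ fun b => !b) = id from funext fun b => Bool.not_not b,
      List.map_id]

lemma Q_symm (i j : ℕ) : Q i j = Q j i := by
  rw [Q_eq, Q_eq, QV_swap]
  rfl

lemma main_q (i j : ℕ) :
    (if 1 ≤ i ∧ 1 ≤ j then (Q (i - 1) (j - 1) : ℚ) else 0)
      - (if 3 ≤ i then (Q (i - 3) j : ℚ) else 0)
      - (if 3 ≤ j then (Q i (j - 3) : ℚ) else 0)
    = (if i = 2 ∧ j = 2 then (1 : ℚ) else 0)
      - (if j = 0 then gCoeff i else 0) - (if i = 0 then gCoeff j else 0) := by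
  by_cases hij : 1 ≤ i ∧ 1 ≤ j
  · obtain ⟨hi, hj⟩ := hij
    rw [if_pos ⟨hi, hj⟩, if_neg (by omega : ¬ j = 0), if_neg (by omega : ¬ i = 0)]
    have hm := main_rec i j hi hj
    have hmq : (Q (i - 1) (j - 1) : ℚ) = (if i = 2 ∧ j = 2 then (1 : ℚ) else 0)
        + (if 3 ≤ j then (Q i (j - 3) : ℚ) else 0)
        + (if 3 ≤ i then (Q (i - 3) j : ℚ) else 0) := by
      exact_mod_cast hm
    rw [hmq]
    ring
  · rw [if_neg hij]
    unfold gCoeff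
    rcases Nat.eq_zero_or_pos j with hj | hj
    · subst hj
      rw [if_neg (by omega : ¬ (3:ℕ) ≤ 0), if_neg (by omega : ¬ (i = 2 ∧ (0:ℕ) = 2)),
        if_pos rfl]
      by_cases hi0 : i = 0
      · subst hi0
        norm_num
      · rw [if_neg hi0]
    · have hi : i = 0 := by omega
      subst hi
      rw [if_neg (by omega : ¬ (3:ℕ) ≤ 0), if_neg (by omega : ¬ ((0:ℕ) = 2 ∧ j = 2)),
        if_pos rfl, if_neg (by omega : ¬ j = 0)]
      rw [show ∀ m : ℕ, Q 0 m = Q m 0 from fun m => Q_symm 0 m]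


/-- The functional equation `(xy − x³ − y³) Q(x,y) = x²y² − G(x) − G(y)` in `ℚ[[x, y]]`. -/
theorem knight_functional_equation :
    (MvPowerSeries.X 0 * MvPowerSeries.X 1 - MvPowerSeries.X 0 ^ 3 -
        MvPowerSeries.X 1 ^ 3) * Qxy =
      MvPowerSeries.X 0 ^ 2 * MvPowerSeries.X 1 ^ 2 - Gx - Gy := by
  apply MvPowerSeries.ext
  intro e
  rw [sub_mul, sub_mul, map_sub, map_sub, map_sub, map_sub]
  have hX01 : (MvPowerSeries.X 0 * MvPowerSeries.X 1 : MvPowerSeries (Fin 2) ℚ)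
      = MvPowerSeries.monomial (Finsupp.single 0 1 + Finsupp.single 1 1) 1 := by
    rw [MvPowerSeries.X_def, MvPowerSeries.X_def, MvPowerSeries.monomial_mul_monomial, one_mul]
  have hX22 : (MvPowerSeries.X 0 ^ 2 * MvPowerSeries.X 1 ^ 2 : MvPowerSeries (Fin 2) ℚ)
      = MvPowerSeries.monomial (Finsupp.single 0 2 + Finsupp.single 1 2) 1 := by
    rw [MvPowerSeries.X_pow_eq, MvPowerSeries.X_pow_eq, MvPowerSeries.monomial_mul_monomial,
      one_mul]
  rw [hX01, hX22, MvPowerSeries.X_pow_eq, MvPowerSeries.X_pow_eq,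
    MvPowerSeries.coeff_monomial_mul, MvPowerSeries.coeff_monomial_mul,
    MvPowerSeries.coeff_monomial_mul, MvPowerSeries.coeff_monomial]
  have hGx : MvPowerSeries.coeff e Gx = if e 1 = 0 then gCoeff (e 0) else 0 := rfl
  have hGy : MvPowerSeries.coeff e Gy = if e 0 = 0 then gCoeff (e 1) else 0 := rfl
  have hQc : ∀ d : Fin 2 →₀ ℕ, MvPowerSeries.coeff d Qxy = (Q (d 0) (d 1) : ℚ) := fun _ => rfl
  rw [hGx, hGy, hQc, hQc, hQc]
  have c1 : ((Finsupp.single (0 : Fin 2) 1 + Finsupp.single (1 : Fin 2) 1 : Fin 2 →₀ ℕ) ≤ e)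
      ↔ (1 ≤ e 0 ∧ 1 ≤ e 1) := by
    rw [Finsupp.le_def]
    simp [Fin.forall_fin_two]
  have c2 : ((Finsupp.single (0 : Fin 2) 3 : Fin 2 →₀ ℕ) ≤ e) ↔ 3 ≤ e 0 := by
    rw [Finsupp.le_def]
    simp [Fin.forall_fin_two, Finsupp.single_apply]
  have c3 : ((Finsupp.single (1 : Fin 2) 3 : Fin 2 →₀ ℕ) ≤ e) ↔ 3 ≤ e 1 := by
    rw [Finsupp.le_def]
    simp [Fin.forall_fin_two, Finsupp.single_apply]
  have c4 : (e = Finsupp.single (0 : Fin 2) 2 + Finsupp.single (1 : Fin 2) 2)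
      ↔ (e 0 = 2 ∧ e 1 = 2) := by
    rw [Finsupp.ext_iff]
    simp [Fin.forall_fin_two]
  have d1 : ((e - (Finsupp.single (0 : Fin 2) 1 + Finsupp.single (1 : Fin 2) 1) : Fin 2 →₀ ℕ)) 0
      = e 0 - 1 := by simp
  have d2 : ((e - (Finsupp.single (0 : Fin 2) 1 + Finsupp.single (1 : Fin 2) 1) : Fin 2 →₀ ℕ)) 1
      = e 1 - 1 := by simp
  have d3 : ((e - Finsupp.single (0 : Fin 2) 3 : Fin 2 →₀ ℕ)) 0 = e 0 - 3 := by simp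
  have d4 : ((e - Finsupp.single (0 : Fin 2) 3 : Fin 2 →₀ ℕ)) 1 = e 1 := by
    simp [Finsupp.single_apply]
  have d5 : ((e - Finsupp.single (1 : Fin 2) 3 : Fin 2 →₀ ℕ)) 0 = e 0 := by
    simp [Finsupp.single_apply]
  have d6 : ((e - Finsupp.single (1 : Fin 2) 3 : Fin 2 →₀ ℕ)) 1 = e 1 - 3 := by simp
  simp only [c1, c2, c3, c4, d1, d2, d3, d4, d5, d6, one_mul]
  exact main_q (e 0) (e 1)
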